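/- Let $(\Omega,\mathcal F,\mathbb P)$ be a probability space and let $Y:[0,\infty)\times\Omega\to\mathbb N$ be a unit-intensity Poisson counting process, i.e. $Y(0)=0$ almost surely, every sample path is nondecreasing and right-continuous, and for every finite sequence $0=t_0\le t_1\le\dots\le t_k$ the increments $Y(t_1)-Y(t_0),\dots,Y(t_k)-Y(t_{k-1})$ are independent and $Y(t_i)-Y(t_{i-1})$ has the Poisson distribution with mean $t_i-t_{i-1}$. Fix an integer $n\ge 1$ and $T>0$, and set $w(t)=Y(nt)-nt$. Then for every real $x$ with $0\le x\le 2\sqrt n\, T$, $\mathbb P\big(\sup_{t\in[0,T]}|w(t)|\ge x\sqrt n\big)\le 2\exp\big(-x^2/(4T)\big)$. -/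

import Mathlib

open MeasureTheory ProbabilityTheory Real
open scoped NNReal ENNReal

lemma poisson_mgf (lam : ℝ≥0) (r : ℝ) :
    ∫⁻ a : ℕ, ENNReal.ofReal (rexp (r * a)) ∂(poissonMeasure lam)
      = ENNReal.ofReal (rexp (lam * (rexp r - 1))) := by
  rw [lintegral_countable']
  have h1 : ∀ a : ℕ, ENNReal.ofReal (rexp (r * a)) * poissonMeasure lam {a}
      = ENNReal.ofReal (rexp (-lam) * ((lam * rexp r) ^ a / a.factorial)) := by
    intro a
    rw [poissonMeasure_singleton]
    show _ * ENNReal.ofReal (poissonPMFReal lam a) = _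
    rw [← ENNReal.ofReal_mul (by positivity)]
    congr 1
    rw [poissonPMFReal, mul_pow, ← Real.exp_nat_mul]
    ring_nf
  simp_rw [h1]
  rw [← ENNReal.ofReal_tsum_of_nonneg (fun a => by positivity)
    ((Real.summable_pow_div_factorial _).mul_left _)]
  congr 1
  rw [tsum_mul_left, (NormedSpace.expSeries_div_hasSum_exp (lam * rexp r)).tsum_eq,
    ← Real.exp_eq_exp_ℝ, ← Real.exp_add]
  congr 1
  ring

section Grid
variable {Ω : Type*} [MeasurableSpace Ω] (P : Measure Ω) [IsProbabilityMeasure P]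
  (Y : ℝ → Ω → ℕ)

lemma chernoff_grid
    (hYmeas : ∀ t : ℝ, Measurable (Y t))
    (hYmono : ∀ ω : Ω, ∀ ⦃s t : ℝ⦄, 0 ≤ s → s ≤ t → Y s ω ≤ Y t ω)
    (hYindep : ∀ (k : ℕ) (t : Fin (k + 1) → ℝ), Monotone t → t 0 = 0 →
      iIndepFun
        (fun (i : Fin k) (ω : Ω) => Y (t i.succ) ω - Y (t i.castSucc) ω) P)
    (hYpoisson : ∀ (s t : ℝ), 0 ≤ s → s ≤ t →
      P.map (fun ω => Y t ω - Y s ω) = poissonMeasure (t - s).toNNReal)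
    (k : ℕ) (v : ℕ → ℝ) (hv : Monotone v) (hv0 : v 0 = 0) (r b : ℝ) :
    ENNReal.ofReal (rexp b) *
      P {ω | ∃ i ≤ k, b ≤ r * ((Y (v i) ω - Y 0 ω : ℕ) : ℝ) - r * v i}
      ≤ ENNReal.ofReal (rexp (v k * (rexp r - 1 - r))) := by
  classical
  have hvnn : ∀ i, 0 ≤ v i := fun i => hv0 ▸ hv (Nat.zero_le i)
  set X : ℕ → Ω → ℕ := fun j ω => Y (v (j+1)) ω - Y (v j) ω with hXdef
  set Z : ℕ → Ω → ℕ := fun i ω => Y (v i) ω - Y 0 ω with hZdef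
  have hY0le : ∀ i ω, Y 0 ω ≤ Y (v i) ω := fun i ω => hYmono ω le_rfl (hvnn i)
  have hYle : ∀ ⦃i j : ℕ⦄, i ≤ j → ∀ ω, Y (v i) ω ≤ Y (v j) ω :=
    fun i j hij ω => hYmono ω (hvnn i) (hv hij)
  set S : ℕ → Ω → ℝ := fun i ω => r * (Z i ω : ℝ) - r * v i with hSdef
  have hgoal : {ω | ∃ i ≤ k, b ≤ r * ((Y (v i) ω - Y 0 ω : ℕ) : ℝ) - r * v i}
      = {ω | ∃ i ≤ k, b ≤ S i ω} := rfl
  rw [hgoal]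
  set M : ℕ → Ω → ℝ≥0∞ := fun i ω => ENNReal.ofReal (rexp (S i ω)) with hMdef
  set A : ℕ → Set Ω := fun i => {ω | b ≤ S i ω ∧ ∀ j, j < i → S j ω < b} with hAdef
  set D : ℕ → Ω → ℕ := fun i ω => Y (v k) ω - Y (v i) ω with hDdef
  set H : ℕ → Ω → ℝ≥0∞ :=
    fun i ω => ENNReal.ofReal (rexp (r * (D i ω : ℝ) - r * (v k - v i))) with hHdef
  have hZmeas : ∀ i, Measurable (Z i) := fun i => (hYmeas _).sub (hYmeas 0)
  have hSmeas : ∀ i, Measurable (S i) := fun i =>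
    (measurable_from_nat (f := fun m : ℕ => r * (m : ℝ) - r * v i)).comp (hZmeas i)
  have hMmeas : ∀ i, Measurable (M i) := fun i =>
    ENNReal.measurable_ofReal.comp (Real.measurable_exp.comp (hSmeas i))
  have hHmeas : ∀ i, Measurable (H i) := fun i =>
    (measurable_from_nat (f := fun m : ℕ =>
      ENNReal.ofReal (rexp (r * (m : ℝ) - r * (v k - v i))))).comp ((hYmeas _).sub (hYmeas _))
  have hAmeas : ∀ i, MeasurableSet (A i) := by
    intro i
    have : A i = {ω | b ≤ S i ω} ∩ ⋂ (j : ℕ) (_ : j < i), {ω | S j ω < b} := by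
      ext ω; simp [hAdef]
    rw [this]
    exact (measurableSet_le measurable_const (hSmeas i)).inter
      (MeasurableSet.iInter fun j => MeasurableSet.iInter fun _ =>
        measurableSet_lt (hSmeas j) measurable_const)
  have hAdisj : ∀ ⦃i j : ℕ⦄, i ≠ j → Disjoint (A i) (A j) := by
    intro i j hij
    rw [Set.disjoint_left]
    rintro ω ⟨h1i, h2i⟩ ⟨h1j, h2j⟩
    rcases lt_or_gt_of_ne hij with h | h
    · exact absurd h1i (not_le.2 (h2j i h))
    · exact absurd h1j (not_le.2 (h2i j h))
  have hZsum : ∀ i ω, Z i ω = ∑ l ∈ Finset.range i, X l ω := by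
    intro i ω
    induction i with
    | zero => simp [hZdef, hv0]
    | succ m ih =>
      rw [Finset.sum_range_succ, ← ih]
      have h1 := hY0le m ω
      have h2 : Y (v m) ω ≤ Y (v (m+1)) ω := hYle (by omega) ω
      have h0 := hY0le (m+1) ω
      simp only [hZdef, hXdef, Nat.succ_eq_add_one]
      omega

  -- MGF of H i
  have hHint : ∀ i, i ≤ k → ∫⁻ ω, H i ω ∂P
      = ENNReal.ofReal (rexp ((v k - v i) * (rexp r - 1 - r))) := by
    intro i hik
    have hvik : v i ≤ v k := hv hik
    have hc : (0:ℝ) ≤ v k - v i := sub_nonneg.2 hvik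
    simp only [hHdef, hDdef]
    have hsplit : ∀ ω : Ω, ENNReal.ofReal (rexp (r * ((Y (v k) ω - Y (v i) ω : ℕ) : ℝ)
          - r * (v k - v i)))
        = ENNReal.ofReal (rexp (-(r * (v k - v i)))) *
          ENNReal.ofReal (rexp (r * ((Y (v k) ω - Y (v i) ω : ℕ) : ℝ))) := by
      intro ω
      rw [← ENNReal.ofReal_mul (exp_nonneg _), ← Real.exp_add]
      congr 1
      ring
    simp_rw [hsplit]
    have hmeasg : Measurable fun ω : Ω =>
        ENNReal.ofReal (rexp (r * ((Y (v k) ω - Y (v i) ω : ℕ) : ℝ))) :=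
      (measurable_from_nat (f := fun m : ℕ => ENNReal.ofReal (rexp (r * (m:ℝ))))).comp
        ((hYmeas _).sub (hYmeas _))
    rw [lintegral_const_mul _ hmeasg]
    have hmap := hYpoisson (v i) (v k) (hvnn i) hvik
    have hlm := lintegral_map (μ := P)
      (f := fun m : ℕ => ENNReal.ofReal (rexp (r * (m:ℝ))))
      (g := fun ω => Y (v k) ω - Y (v i) ω) measurable_from_nat ((hYmeas _).sub (hYmeas _))
    rw [hmap, poisson_mgf] at hlm
    rw [← hlm, ← ENNReal.ofReal_mul (exp_nonneg _), ← Real.exp_add,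
      Real.coe_toNNReal _ hc]
    congr 1
    ring
  have hHone : ∀ i, i ≤ k → 1 ≤ ∫⁻ ω, H i ω ∂P := by
    intro i hik
    rw [hHint i hik]
    rw [ENNReal.one_le_ofReal]
    refine Real.one_le_exp (mul_nonneg (sub_nonneg.2 (hv hik)) ?_)
    have := Real.add_one_le_exp r
    linarith
  -- Independence
  have hindepAM : ∀ i, i ≤ k → IndepFun ((A i).indicator (M i)) (H i) P := by
    intro i hik
    set f : Fin k → Ω → ℕ := fun j ω =>
      Y ((fun m : Fin (k+1) => v (m : ℕ)) j.succ) ω -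
      Y ((fun m : Fin (k+1) => v (m : ℕ)) j.castSucc) ω with hfdef
    have hfam : iIndepFun f P :=
      hYindep k (fun m : Fin (k+1) => v (m : ℕ)) (fun a b hab => hv hab) (by simp [hv0])
    have hfX : ∀ (j : Fin k) (ω : Ω), f j ω = X (j : ℕ) ω := by
      intro j ω
      simp [hfdef, hXdef, Fin.val_succ, Fin.coe_castSucc]
    set Sf : Finset (Fin k) := Finset.univ.filter (fun j => (j:ℕ) < i) with hSf
    set Tf : Finset (Fin k) := Finset.univ.filter (fun j => i ≤ (j:ℕ)) with hTf
    have hdisjST : Disjoint Sf Tf := by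
      simp only [Finset.disjoint_left, hSf, hTf, Finset.mem_filter, Finset.mem_univ, true_and]
      omega
    have hST := hfam.indepFun_finset Sf Tf hdisjST (fun j => (hYmeas _).sub (hYmeas _))
    set getx : ((j : ↥Sf) → ℕ) → ℕ → ℕ := fun xs l =>
      if h : l < i ∧ l < k then xs ⟨⟨l, h.2⟩, by simp [hSf]; exact h.1⟩ else 0 with hgetx
    set sfun : ((j : ↥Sf) → ℕ) → ℕ → ℝ := fun xs j =>
      r * ((∑ l ∈ Finset.range j, getx xs l : ℕ) : ℝ) - r * v j with hsfun
    set Φ : ((j : ↥Sf) → ℕ) → ℝ≥0∞ := fun xs =>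
      (if b ≤ sfun xs i ∧ ∀ j, j < i → sfun xs j < b then 1 else 0) *
        ENNReal.ofReal (rexp (sfun xs i)) with hPhi
    set Ψ : ((j : ↥Tf) → ℕ) → ℝ≥0∞ := fun xs =>
      ENNReal.ofReal (rexp (r * ((∑ j ∈ Tf.attach, xs j : ℕ) : ℝ) - r * (v k - v i))) with hPsi
    have hsf : ∀ (ω : Ω) (j : ℕ), j ≤ i → sfun (fun l : ↥Sf => f ↑l ω) j = S j ω := by
      intro ω j hj
      simp only [hsfun, hSdef]
      have hsum : (∑ l ∈ Finset.range j, getx (fun l : ↥Sf => f ↑l ω) l) = Z j ω := by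
        rw [hZsum j ω]
        refine Finset.sum_congr rfl fun l hl => ?_
        have hl' : l < j := Finset.mem_range.1 hl
        have h1 : l < i := lt_of_lt_of_le hl' hj
        have h2 : l < k := lt_of_lt_of_le h1 hik
        simp only [hgetx, dif_pos (And.intro h1 h2)]
        rw [hfX]
      rw [hsum]
    have hpsi : ∀ ω : Ω, (∑ j ∈ Tf.attach, f (↑j : Fin k) ω) = D i ω := by
      intro ω
      have e1 : (∑ j ∈ Tf.attach, f (↑j : Fin k) ω) = ∑ j ∈ Tf, X (j : ℕ) ω := by
        rw [Finset.sum_attach Tf (fun j => f j ω)]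
        exact Finset.sum_congr rfl fun j _ => hfX j ω
      have e2 : (∑ j ∈ Tf, X (j : ℕ) ω) = ∑ j : Fin k, if i ≤ (j:ℕ) then X (j:ℕ) ω else 0 := by
        rw [hTf, Finset.sum_filter]
      have e3 : (∑ j : Fin k, if i ≤ (j:ℕ) then X (j:ℕ) ω else 0)
          = ∑ l ∈ Finset.range k, (if i ≤ l then X l ω else 0) :=
        Fin.sum_univ_eq_sum_range (fun l => if i ≤ l then X l ω else 0) k
      have e4 : ∀ m, i ≤ m → (∑ l ∈ Finset.range m, (if i ≤ l then X l ω else 0))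
          = Y (v m) ω - Y (v i) ω := by
        intro m him
        induction m, him using Nat.le_induction with
        | base =>
          rw [Nat.sub_self]
          refine Finset.sum_eq_zero fun l hl => ?_
          have hli : l < i := Finset.mem_range.1 hl
          rw [if_neg (by omega)]
        | succ m him ih =>
          rw [Finset.sum_range_succ, ih, if_pos (by omega : i ≤ m)]
          have h1 : Y (v i) ω ≤ Y (v m) ω := hYle him ω
          have h2 : Y (v m) ω ≤ Y (v (m+1)) ω := hYle (by omega) ω
          simp only [hXdef]
          omega
      rw [e1, e2, e3, e4 k hik]
    have hFeq : (A i).indicator (M i) = Φ ∘ (fun a (j : ↥Sf) => f ↑j a) := by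
      funext ω
      have hcond : (b ≤ sfun (fun l : ↥Sf => f ↑l ω) i ∧
          ∀ j, j < i → sfun (fun l : ↥Sf => f ↑l ω) j < b)
          ↔ (b ≤ S i ω ∧ ∀ j, j < i → S j ω < b) := by
        rw [hsf ω i le_rfl]
        constructor
        · rintro ⟨h1, h2⟩
          exact ⟨h1, fun j hj => (hsf ω j hj.le) ▸ h2 j hj⟩
        · rintro ⟨h1, h2⟩
          exact ⟨h1, fun j hj => (hsf ω j hj.le).symm ▸ h2 j hj⟩
      by_cases hmem : ω ∈ A i
      · have hm' : b ≤ S i ω ∧ ∀ j, j < i → S j ω < b := hmem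
        rw [Set.indicator_of_mem hmem]
        simp only [Function.comp_apply, hPhi]
        rw [if_pos (hcond.2 hm'), one_mul, hsf ω i le_rfl]
      · have hm' : ¬(b ≤ S i ω ∧ ∀ j, j < i → S j ω < b) := hmem
        rw [Set.indicator_of_notMem hmem]
        simp only [Function.comp_apply, hPhi]
        rw [if_neg (fun hc' => hm' (hcond.1 hc')), zero_mul]
    have hGeq : H i = Ψ ∘ (fun a (j : ↥Tf) => f ↑j a) := by
      funext ω
      simp only [Function.comp_apply, hPsi, hHdef]
      rw [hpsi ω]
    rw [hFeq, hGeq]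
    exact hST.comp (measurable_of_countable Φ) (measurable_of_countable Ψ)
  -- per-index key bound
  have hMk : ∫⁻ ω, M k ω ∂P = ENNReal.ofReal (rexp (v k * (rexp r - 1 - r))) := by
    have hMH : M k = H 0 := by
      funext ω
      simp only [hMdef, hHdef, hSdef, hZdef, hDdef, hv0, sub_zero]
    rw [hMH, hHint 0 (Nat.zero_le k), hv0, sub_zero]
  have key : ∀ i, i ≤ k → ENNReal.ofReal (rexp b) * P (A i)
      ≤ ∫⁻ ω, (A i).indicator (M k) ω ∂P := by
    intro i hik
    have h1 : ENNReal.ofReal (rexp b) * P (A i) ≤ ∫⁻ ω, (A i).indicator (M i) ω ∂P := by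
      rw [lintegral_indicator (hAmeas i)]
      calc ENNReal.ofReal (rexp b) * P (A i)
          = ∫⁻ _ω in A i, ENNReal.ofReal (rexp b) ∂P := by rw [setLIntegral_const]
        _ ≤ ∫⁻ ω in A i, M i ω ∂P := by
            refine setLIntegral_mono (hMmeas i) (fun ω hω => ?_)
            exact ENNReal.ofReal_le_ofReal (exp_le_exp.2 hω.1)
    calc ENNReal.ofReal (rexp b) * P (A i) ≤ ∫⁻ ω, (A i).indicator (M i) ω ∂P := h1
      _ = (∫⁻ ω, (A i).indicator (M i) ω ∂P) * 1 := (mul_one _).symm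
      _ ≤ (∫⁻ ω, (A i).indicator (M i) ω ∂P) * ∫⁻ ω, H i ω ∂P :=
          mul_le_mul_right (hHone i hik) _
      _ = ∫⁻ ω, ((A i).indicator (M i) * H i) ω ∂P :=
          (lintegral_mul_eq_lintegral_mul_lintegral_of_indepFun
            ((hMmeas i).indicator (hAmeas i)) (hHmeas i) (hindepAM i hik)).symm
      _ = ∫⁻ ω, (A i).indicator (M k) ω ∂P := by
          congr 1
          funext ω
          by_cases hω : ω ∈ A i
          · simp only [Pi.mul_apply]
            rw [Set.indicator_of_mem hω, Set.indicator_of_mem hω]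
            simp only [hMdef, hHdef, hSdef]
            rw [← ENNReal.ofReal_mul (exp_nonneg _), ← Real.exp_add]
            have hZDn : Z i ω + D i ω = Z k ω := by
              have h1' := hY0le i ω
              have h2' := hYle hik ω
              simp only [hZdef, hDdef]
              omega
            have hZD : (Z i ω : ℝ) + (D i ω : ℝ) = (Z k ω : ℝ) := by exact_mod_cast hZDn
            congr 1
            rw [← hZD]
            ring
          · simp only [Pi.mul_apply]
            rw [Set.indicator_of_notMem hω, Set.indicator_of_notMem hω, zero_mul]
  -- assemble
  have hEeq : {ω | ∃ i ≤ k, b ≤ S i ω} = ⋃ i ∈ Finset.range (k+1), A i := by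
    ext ω
    simp only [Set.mem_setOf_eq, Set.mem_iUnion, Finset.mem_range]
    constructor
    · rintro ⟨i, hik, hbi⟩
      have hex : ∃ m, b ≤ S m ω := ⟨i, hbi⟩
      refine ⟨Nat.find hex, ⟨?_, Nat.find_spec hex, fun j hj => not_le.1 (Nat.find_min hex hj)⟩⟩
      have := Nat.find_min' hex hbi
      omega
    · rintro ⟨i, hik, hbi, _⟩
      exact ⟨i, by omega, hbi⟩
  rw [hEeq]
  have hP : P (⋃ i ∈ Finset.range (k+1), A i) = ∑ i ∈ Finset.range (k+1), P (A i) :=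
    measure_biUnion_finset
      (fun i _ j _ hij => hAdisj hij) (fun i _ => hAmeas i)
  rw [hP, Finset.mul_sum]
  calc ∑ i ∈ Finset.range (k+1), ENNReal.ofReal (rexp b) * P (A i)
      ≤ ∑ i ∈ Finset.range (k+1), ∫⁻ ω, (A i).indicator (M k) ω ∂P :=
        Finset.sum_le_sum fun i hi => key i (Nat.lt_succ_iff.1 (Finset.mem_range.1 hi))
    _ = ∫⁻ ω, ∑ i ∈ Finset.range (k+1), (A i).indicator (M k) ω ∂P :=
        (lintegral_finset_sum _ fun i _ => (hMmeas k).indicator (hAmeas i)).symm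
    _ ≤ ∫⁻ ω, M k ω ∂P := by
        refine lintegral_mono fun ω => ?_
        by_cases h : ∃ i ∈ Finset.range (k+1), ω ∈ A i
        · obtain ⟨i0, hi0, hmem⟩ := h
          rw [Finset.sum_eq_single_of_mem i0 hi0 (fun j hj hne => Set.indicator_of_notMem
            (fun hjmem => Set.disjoint_left.1 (hAdisj hne) hjmem hmem) _)]
          rw [Set.indicator_of_mem hmem]
        · push_neg at h
          rw [Finset.sum_eq_zero fun j hj => Set.indicator_of_notMem (h j hj) _]
          exact zero_le
    _ = _ := hMk

end Grid

lemma exp_sub_one_sub_le {u : ℝ} (h : |u| ≤ 1) : rexp u - 1 - u ≤ u ^ 2 := by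
  have hb := Real.exp_bound h (by norm_num : (0:ℕ) < 2)
  have h1 : ∑ m ∈ Finset.range 2, u ^ m / m.factorial = 1 + u := by
    simp [Finset.sum_range_succ]
  rw [h1] at hb
  norm_num [Nat.factorial] at hb
  have := (abs_le.1 hb).2
  nlinarith [sq_abs u]

lemma dyadic_exists {T : ℝ} (hT : 0 < T) {a d : ℝ} (ha : 0 ≤ a) (had : a < d) (hdT : d ≤ T) :
    ∃ m j : ℕ, j ≤ 2^m ∧ a < (j:ℝ) * (T / 2^m) ∧ (j:ℝ) * (T / 2^m) < d := by
  obtain ⟨m, hm⟩ := pow_unbounded_of_one_lt (T/(d-a)) (one_lt_two)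
  have h2m : (0:ℝ) < (2:ℝ)^m := by positivity
  have hda : (0:ℝ) < d - a := sub_pos.2 had
  have hTm : T / 2^m < d - a := by
    rw [div_lt_iff₀ h2m]
    have := (div_lt_iff₀ hda).1 hm
    nlinarith
  set z := a * 2^m / T with hz
  have hz0 : 0 ≤ z := by positivity
  have h1 : (Nat.floor z : ℝ) ≤ z := Nat.floor_le hz0
  have h2 : z < (Nat.floor z : ℝ) + 1 := Nat.lt_floor_add_one z
  have hzq : z * (T/2^m) = a := by rw [hz]; field_simp
  have hdiv : (0:ℝ) < T/2^m := div_pos hT h2m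
  have hgt : a < ((Nat.floor z + 1:ℕ):ℝ) * (T/2^m) := by push_cast; nlinarith
  have hlt : ((Nat.floor z + 1:ℕ):ℝ) * (T/2^m) < d := by
    have hQ : ((Nat.floor z + 1:ℕ):ℝ) * (T/2^m) ≤ a + T/2^m := by push_cast; nlinarith
    linarith
  refine ⟨m, Nat.floor z + 1, ?_, hgt, hlt⟩
  have hTeq : ((2:ℝ)^m) * (T/2^m) = T := by field_simp
  have hstep : ((Nat.floor z + 1:ℕ):ℝ) * (T/2^m) < (2:ℝ)^m * (T/2^m) := by
    rw [hTeq]; linarith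
  have hjR : ((Nat.floor z + 1:ℕ):ℝ) < (2:ℝ)^m := (mul_lt_mul_iff_of_pos_right hdiv).1 hstep
  have : ((Nat.floor z + 1:ℕ):ℝ) < ((2^m:ℕ):ℝ) := by push_cast at hjR ⊢; exact hjR
  exact (Nat.cast_lt.1 this).le

set_option maxHeartbeats 2000000 in
/-- Appendix lemma of the paper: if `Y` is a unit-intensity Poisson counting process
(`Y 0 = 0` a.s., nondecreasing right-continuous sample paths, independent Poisson-distributed
increments), `n ≥ 1`, `T > 0`, and `w t = Y (n t) - n t`, then for every
`0 ≤ x ≤ 2 √n T` one has `ℙ(sup_{t ∈ [0,T]} |w t| ≥ x √n) ≤ 2 exp (-x² / (4 T))`. -/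
theorem counting_process_sup_tail_bound
    {Ω : Type*} [MeasurableSpace Ω] (P : Measure Ω) [IsProbabilityMeasure P]
    (Y : ℝ → Ω → ℕ)
    (hYmeas : ∀ t : ℝ, Measurable (Y t))
    (hY0 : ∀ᵐ ω ∂P, Y 0 ω = 0)
    (hYmono : ∀ ω : Ω, ∀ ⦃s t : ℝ⦄, 0 ≤ s → s ≤ t → Y s ω ≤ Y t ω)
    (hYrc : ∀ ω : Ω, ∀ t : ℝ, 0 ≤ t →
      ContinuousWithinAt (fun s => Y s ω) (Set.Ici t) t)
    (hYindep : ∀ (k : ℕ) (t : Fin (k + 1) → ℝ), Monotone t → t 0 = 0 →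
      iIndepFun
        (fun (i : Fin k) (ω : Ω) => Y (t i.succ) ω - Y (t i.castSucc) ω) P)
    (hYpoisson : ∀ (s t : ℝ), 0 ≤ s → s ≤ t →
      P.map (fun ω => Y t ω - Y s ω) = poissonMeasure (t - s).toNNReal)
    (n : ℕ) (hn : 1 ≤ n) (T : ℝ) (hT : 0 < T)
    (x : ℝ) (hx0 : 0 ≤ x) (hx2 : x ≤ 2 * Real.sqrt n * T) :
    P {ω | x * Real.sqrt n ≤
        ⨆ t : Set.Icc (0 : ℝ) T, |(Y (n * t) ω : ℝ) - n * t|} ≤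
      ENNReal.ofReal (2 * exp (-x ^ 2 / (4 * T))) := by
  classical
  have hT' : (0:ℝ) ≤ T := hT.le
  rcases eq_or_lt_of_le hx0 with hx0' | hxpos
  · -- x = 0 : trivial bound
    refine le_trans prob_le_one ?_
    rw [← hx0']
    rw [ENNReal.one_le_ofReal]
    norm_num
  have hn0 : (0:ℝ) < n := by exact_mod_cast Nat.lt_of_lt_of_le Nat.zero_lt_one hn
  have hsn1 : (1:ℝ) ≤ Real.sqrt n := by
    rw [show (1:ℝ) = Real.sqrt 1 by simp]
    exact Real.sqrt_le_sqrt (by exact_mod_cast hn)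
  have hsn : (0:ℝ) < Real.sqrt n := lt_of_lt_of_le one_pos hsn1
  have hss : Real.sqrt n * Real.sqrt n = n := Real.mul_self_sqrt hn0.le
  haveI : Nonempty (Set.Icc (0:ℝ) T) := ⟨⟨0, le_refl 0, hT'⟩⟩
  -- dyadic grids
  set v : ℕ → ℕ → ℝ := fun m j => (n:ℝ) * min ((j:ℝ) * (T / 2^m)) T with hvdef
  have hvmono : ∀ m, Monotone (v m) := by
    intro m a b hab
    have h1 : (a:ℝ) * (T/2^m) ≤ (b:ℝ)*(T/2^m) :=
      mul_le_mul_of_nonneg_right (by exact_mod_cast hab) (by positivity)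
    exact mul_le_mul_of_nonneg_left (min_le_min h1 le_rfl) (by positivity)
  have hv0 : ∀ m, v m 0 = 0 := by
    intro m
    simp [hvdef, min_eq_left hT']
  have hvtop : ∀ m, v m (2^m) = n * T := by
    intro m
    have h1 : ((2^m : ℕ):ℝ) * (T / 2^m) = T := by
      push_cast
      field_simp
    simp only [hvdef, h1, min_self]
  -- the event
  set E : Set Ω := {ω | x * Real.sqrt n ≤
      ⨆ t : Set.Icc (0 : ℝ) T, |(Y (n * t) ω : ℝ) - n * t|} with hEdef
  suffices hsuf : ∀ y : ℝ, 0 < y → y < x →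
      P E ≤ ENNReal.ofReal (2 * rexp (-y^2/(4*T))) by
    have htd : Filter.Tendsto (fun y : ℝ => ENNReal.ofReal (2 * rexp (-y^2/(4*T))))
        (nhdsWithin x (Set.Iio x)) (nhds (ENNReal.ofReal (2 * rexp (-x^2/(4*T))))) := by
      apply Filter.Tendsto.mono_left ?_ nhdsWithin_le_nhds
      exact (ENNReal.continuous_ofReal.tendsto _).comp
        (Continuous.tendsto (by continuity) x)
    have hxev : ∀ᶠ y in nhdsWithin x (Set.Iio x),
        P E ≤ ENNReal.ofReal (2 * rexp (-y^2/(4*T))) := by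
      filter_upwards [Ioo_mem_nhdsLT_of_mem (Set.mem_Ioc.2 ⟨hxpos, le_refl x⟩)] with y hy
      exact hsuf y hy.1 hy.2
    have := ge_of_tendsto htd hxev
    simpa [neg_div] using this
  intro y hy0 hyx
  set c' : ℝ := y * Real.sqrt n with hc'def
  set C : ℕ → Set Ω := fun m => {ω | ∃ j, j ≤ 2^m ∧
    c' ≤ |(Y (v m j) ω : ℝ) - v m j|} with hCdef
  -- E ⊆ ⋃ m, C m
  have hEsub : E ⊆ ⋃ m, C m := by
    intro ω hω
    have hω' : x * Real.sqrt n ≤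
        ⨆ t : Set.Icc (0 : ℝ) T, |(Y (n * t) ω : ℝ) - n * t| := hω
    set g : Set.Icc (0:ℝ) T → ℝ := fun t => |(Y (n * t) ω : ℝ) - n * t| with hgdef
    by_cases hb : BddAbove (Set.range g)
    · have hcx : c' < x * Real.sqrt n := by
        rw [hc'def]
        exact mul_lt_mul_of_pos_right hyx hsn
      obtain ⟨t0, ht0⟩ := exists_lt_of_lt_ciSup (lt_of_lt_of_le hcx hω')
      rcases eq_or_lt_of_le t0.2.2 with htT | htT
      · -- t0 = T
        refine Set.mem_iUnion.2 ⟨0, 1, le_refl 1, ?_⟩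
        have hveq : v 0 1 = (n:ℝ) * T := by
          simp [hvdef]
        rw [hveq]
        have : g t0 = |(Y ((n:ℝ) * T) ω : ℝ) - (n:ℝ) * T| := by
          rw [hgdef]
          simp only []
          rw [htT]
        rw [← this]
        exact ht0.le
      · -- t0 < T : use right-continuity
        have ht00 : (0:ℝ) ≤ (t0:ℝ) := t0.2.1
        have hcont : ContinuousWithinAt
            (fun u : ℝ => |(Y ((n:ℝ) * u) ω : ℝ) - (n:ℝ) * u|)
            (Set.Ici (t0:ℝ)) t0 := by
          have h1 : ContinuousWithinAt (fun s : ℝ => Y s ω)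
              (Set.Ici ((n:ℝ)*(t0:ℝ))) ((n:ℝ)*(t0:ℝ)) :=
            hYrc ω _ (by positivity)
          have hmul : ContinuousWithinAt (fun u : ℝ => (n:ℝ) * u) (Set.Ici (t0:ℝ)) t0 :=
            (continuous_const.mul continuous_id).continuousWithinAt
          have h2 : ContinuousWithinAt (fun u : ℝ => Y ((n:ℝ)*u) ω) (Set.Ici (t0:ℝ)) t0 := by
            refine ContinuousWithinAt.comp h1 hmul ?_
            intro u hu
            exact mul_le_mul_of_nonneg_left hu hn0.le
          have h3 : ContinuousWithinAt (fun u : ℝ => ((Y ((n:ℝ)*u) ω : ℕ) : ℝ))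
              (Set.Ici (t0:ℝ)) t0 :=
            (continuous_of_discreteTopology (f := fun m : ℕ => (m:ℝ))).continuousAt.comp_continuousWithinAt h2
          exact (h3.sub hmul).abs
        have hev : (fun u : ℝ => |(Y ((n:ℝ) * u) ω : ℝ) - (n:ℝ) * u|) ⁻¹'
            (Set.Ioi c') ∈ nhdsWithin (t0:ℝ) (Set.Ici (t0:ℝ)) :=
          hcont (Ioi_mem_nhds ht0)
        obtain ⟨ε, hε0, hball⟩ := Metric.mem_nhdsWithin_iff.1 hev
        obtain ⟨m, j, hj2, hq1, hq2⟩ := dyadic_exists hT ht00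
          (lt_min (by linarith) htT : (t0:ℝ) < min ((t0:ℝ)+ε) T) (min_le_right _ _)
        refine Set.mem_iUnion.2 ⟨m, j, hj2, ?_⟩
        have hqT : (j:ℝ)*(T/2^m) < T := lt_of_lt_of_le hq2 (min_le_right _ _)
        have hmin : min ((j:ℝ)*(T/2^m)) T = (j:ℝ)*(T/2^m) := min_eq_left hqT.le
        have hmem : (j:ℝ)*(T/2^m) ∈ Metric.ball (t0:ℝ) ε ∩ Set.Ici (t0:ℝ) := by
          constructor
          · rw [Metric.mem_ball, Real.dist_eq, abs_sub_lt_iff]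
            have := lt_of_lt_of_le hq2 (min_le_left _ _)
            constructor <;> linarith
          · exact hq1.le
        have := hball hmem
        simp only [Set.mem_preimage, Set.mem_Ioi] at this
        show c' ≤ |(Y (v m j) ω : ℝ) - v m j|
        simp only [hvdef]
        rw [hmin]
        exact this.le
    · exfalso
      rw [hgdef] at hb
      rw [Real.iSup_of_not_bddAbove hb] at hω'
      nlinarith
  have hCmono : Monotone C := by
    intro m m' hmm'
    -- suffices to do one step; use induction
    induction m' , hmm' using Nat.le_induction with
    | base => exact le_refl _
    | succ m' hmm' ih =>
      refine le_trans ih ?_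
      intro ω hω
      obtain ⟨j, hj, hval⟩ := hω
      refine ⟨2*j, by omega, ?_⟩
      have hveq : v (m'+1) (2*j) = v m' j := by
        simp only [hvdef]
        congr 2
        push_cast
        rw [pow_succ]
        field_simp
      rw [hveq]
      exact hval
  -- bound each C m
  have hCbound : ∀ m, P (C m) ≤ ENNReal.ofReal (2 * rexp (-y^2/(4*T))) := by
    intro m
    set θ : ℝ := y / (2 * Real.sqrt n * T) with hθdef
    have hθ0 : 0 < θ := by positivity
    have hθ1 : θ ≤ 1 := by
      rw [hθdef, div_le_one (by positivity)]
      linarith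
    set bθ : ℝ := θ * c' with hbθdef
    set Ep : Set Ω := {ω | ∃ i ≤ 2^m, bθ ≤ θ * ((Y (v m i) ω - Y 0 ω : ℕ) : ℝ) - θ * v m i}
      with hEpdef
    set En : Set Ω := {ω | ∃ i ≤ 2^m, bθ ≤ (-θ) * ((Y (v m i) ω - Y 0 ω : ℕ) : ℝ) - (-θ) * v m i}
      with hEndef
    have hsub : C m ⊆ (Ep ∪ En) ∪ {ω | ¬ Y 0 ω = 0} := by
      intro ω hω
      obtain ⟨j, hj, hval⟩ := hω
      by_cases h0 : Y 0 ω = 0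
      · left
        have hcast : ((Y (v m j) ω - Y 0 ω : ℕ):ℝ) = (Y (v m j) ω : ℝ) := by
          rw [h0, Nat.sub_zero]
        rcases le_abs.1 hval with hpos | hneg
        · left
          refine ⟨j, hj, ?_⟩
          rw [hcast]
          have := mul_le_mul_of_nonneg_left hpos hθ0.le
          rw [hbθdef]
          linarith [this]
        · right
          refine ⟨j, hj, ?_⟩
          rw [hcast]
          have := mul_le_mul_of_nonneg_left hneg hθ0.le
          rw [hbθdef]
          linarith [this]
      · right
        exact h0
    have hnull : P {ω | ¬ Y 0 ω = 0} = 0 := ae_iff.1 hY0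
    -- chernoff bounds
    have hexp : ∀ r : ℝ, |r| ≤ 1 →
        P {ω | ∃ i ≤ 2^m, bθ ≤ r * ((Y (v m i) ω - Y 0 ω : ℕ) : ℝ) - r * v m i}
          ≤ ENNReal.ofReal (rexp ((n:ℝ) * T * r^2 - bθ)) := by
      intro r hr
      have hcg := chernoff_grid P Y hYmeas hYmono hYindep hYpoisson (2^m) (v m)
        (hvmono m) (hv0 m) r bθ
      rw [hvtop m] at hcg
      have hb0 : (ENNReal.ofReal (rexp bθ)) ≠ 0 := (ENNReal.ofReal_pos.2 (exp_pos _)).ne'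
      have hbt : (ENNReal.ofReal (rexp bθ)) ≠ ⊤ := ENNReal.ofReal_ne_top
      have hdiv : P {ω | ∃ i ≤ 2^m, bθ ≤ r * ((Y (v m i) ω - Y 0 ω : ℕ) : ℝ) - r * v m i}
          ≤ ENNReal.ofReal (rexp ((n:ℝ) * T * (rexp r - 1 - r))) / ENNReal.ofReal (rexp bθ) := by
        rw [ENNReal.le_div_iff_mul_le (Or.inl hb0) (Or.inl hbt), mul_comm]
        exact hcg
      refine le_trans hdiv ?_
      rw [← ENNReal.ofReal_div_of_pos (exp_pos _), ← Real.exp_sub]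
      apply ENNReal.ofReal_le_ofReal
      apply Real.exp_le_exp.2
      have hquad : rexp r - 1 - r ≤ r^2 := exp_sub_one_sub_le hr
      have : (n:ℝ) * T * (rexp r - 1 - r) ≤ (n:ℝ) * T * r^2 :=
        mul_le_mul_of_nonneg_left hquad (by positivity)
      linarith
    have habs1 : |θ| ≤ 1 := by rw [abs_of_pos hθ0]; exact hθ1
    have habs2 : |(-θ)| ≤ 1 := by rw [abs_neg]; exact habs1
    have hval : (n:ℝ) * T * θ^2 - bθ = -y^2/(4*T) := by
      have hs0 : Real.sqrt (n:ℝ) ≠ 0 := ne_of_gt hsn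
      have hT0 : T ≠ 0 := ne_of_gt hT
      rw [hbθdef, hθdef, hc'def]
      field_simp
      linear_combination (-4) * hss
    have hvaln : (n:ℝ) * T * (-θ)^2 - bθ = -y^2/(4*T) := by
      rw [show ((-θ):ℝ)^2 = θ^2 by ring]
      exact hval
    have hEpB : P Ep ≤ ENNReal.ofReal (rexp (-y^2/(4*T))) := by
      have := hexp θ habs1
      rw [hval] at this
      exact this
    have hEnB : P En ≤ ENNReal.ofReal (rexp (-y^2/(4*T))) := by
      have := hexp (-θ) habs2
      rw [hvaln] at this
      exact this
    calc P (C m) ≤ P ((Ep ∪ En) ∪ {ω | ¬ Y 0 ω = 0}) := measure_mono hsub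
      _ ≤ P (Ep ∪ En) + P {ω | ¬ Y 0 ω = 0} := measure_union_le _ _
      _ = P (Ep ∪ En) := by rw [hnull, add_zero]
      _ ≤ P Ep + P En := measure_union_le _ _
      _ ≤ ENNReal.ofReal (rexp (-y^2/(4*T))) + ENNReal.ofReal (rexp (-y^2/(4*T))) :=
          add_le_add hEpB hEnB
      _ = ENNReal.ofReal (2 * rexp (-y^2/(4*T))) := by
          rw [← ENNReal.ofReal_add (exp_nonneg _) (exp_nonneg _)]
          congr 1
          ring
  calc P E ≤ P (⋃ m, C m) := measure_mono hEsub
    _ = ⨆ m, P (C m) := hCmono.measure_iUnion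
    _ ≤ ENNReal.ofReal (2 * rexp (-y^2/(4*T))) := iSup_le hCbound
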